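/- arXiv:2512.13466 — 4 statements merged into one kernel-verified Lean document; each statement's English description precedes it below -/
import Mathlib

section
/- Enforced constraint restoration: let x : [0, T) → ℝⁿ be a differentiable solution of the autonomous system x'(t) = ψ(x(t)), and suppose the Jacobian J(x(t)) has full row rank for all t. Then the constraint residual decays exponentially: g(x(t)) = e^{−t} g(x(0)) for all t ∈ [0, T). -/
open Matrix

/-- The orthogonal projector `P(J) = I - Jᵀ (J Jᵀ)⁻¹ J` built from a Jacobian matrix. -/
noncomputable def projMat {m n : ℕ} (J : Matrix (Fin m) (Fin n) ℝ) :
    Matrix (Fin n) (Fin n) ℝ :=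
  1 - Jᵀ * (J * Jᵀ)⁻¹ * J

/-- The vector field `ψ(x) = -Jᵀ (J Jᵀ)⁻¹ g(x) - P(x) ∇f(x)`. -/
noncomputable def psi {m n : ℕ}
    (g : EuclideanSpace ℝ (Fin n) → EuclideanSpace ℝ (Fin m))
    (gradf : EuclideanSpace ℝ (Fin n) → EuclideanSpace ℝ (Fin n))
    (J : EuclideanSpace ℝ (Fin n) → Matrix (Fin m) (Fin n) ℝ)
    (x : EuclideanSpace ℝ (Fin n)) : EuclideanSpace ℝ (Fin n) :=
  -(Matrix.toEuclideanLin ((J x)ᵀ * (J x * (J x)ᵀ)⁻¹) (g x)) -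
    Matrix.toEuclideanLin (projMat (J x)) (gradf x)

lemma toEuclideanLin_comp {k m n : ℕ} (A : Matrix (Fin k) (Fin m) ℝ)
    (B : Matrix (Fin m) (Fin n) ℝ) (v : EuclideanSpace ℝ (Fin n)) :
    Matrix.toEuclideanLin A (Matrix.toEuclideanLin B v) =
      Matrix.toEuclideanLin (A * B) v := by
  simp [Matrix.toEuclideanLin_apply, Matrix.mulVec_mulVec]

/-- Enforced constraint restoration: along any differentiable solution of
`x' = ψ(x)` on `[0, T)` with full-row-rank Jacobian, the constraint residual decays
exponentially: `g(x(t)) = e^{-t} g(x(0))`. -/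
theorem constraint_restoration (m n : ℕ) (hmn : m < n)
    (f : EuclideanSpace ℝ (Fin n) → ℝ)
    (g : EuclideanSpace ℝ (Fin n) → EuclideanSpace ℝ (Fin m))
    (gradf : EuclideanSpace ℝ (Fin n) → EuclideanSpace ℝ (Fin n))
    (J : EuclideanSpace ℝ (Fin n) → Matrix (Fin m) (Fin n) ℝ)
    (hf : ContDiff ℝ 1 f) (hg : ContDiff ℝ 1 g)
    (hgrad : ∀ y, HasGradientAt f (gradf y) y)
    (hJ : ∀ y, HasFDerivAt g
      (LinearMap.toContinuousLinearMap (Matrix.toEuclideanLin (J y))) y)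
    (T : ℝ) (x : ℝ → EuclideanSpace ℝ (Fin n))
    (hx : ∀ t ∈ Set.Ico (0 : ℝ) T, HasDerivAt x (psi g gradf J (x t)) t)
    (hrank : ∀ t ∈ Set.Ico (0 : ℝ) T, IsUnit (J (x t) * (J (x t))ᵀ)) :
    ∀ t ∈ Set.Ico (0 : ℝ) T, g (x t) = Real.exp (-t) • g (x 0) := by
  -- derivative of y(t) = g(x(t)) is -y(t)
  have hy : ∀ t ∈ Set.Ico (0 : ℝ) T,
      HasDerivAt (fun t => g (x t)) (-(g (x t))) t := by
    intro t ht
    have h := (hJ (x t)).comp_hasDerivAt t (hx t ht)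
    have hdet : IsUnit (J (x t) * (J (x t))ᵀ).det :=
      (Matrix.isUnit_iff_isUnit_det _).mp (hrank t ht)
    have hinv : J (x t) * (J (x t))ᵀ * (J (x t) * (J (x t))ᵀ)⁻¹ = 1 :=
      Matrix.mul_nonsing_inv _ hdet
    have key : (Matrix.toEuclideanLin (J (x t))) (psi g gradf J (x t))
        = -(g (x t)) := by
      unfold psi
      rw [map_sub, map_neg, toEuclideanLin_comp, toEuclideanLin_comp]
      have h1 : J (x t) * ((J (x t))ᵀ * (J (x t) * (J (x t))ᵀ)⁻¹) = 1 := by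
        rw [← Matrix.mul_assoc]; exact hinv
      have h2 : J (x t) * projMat (J (x t)) = 0 := by
        unfold projMat
        rw [Matrix.mul_sub, Matrix.mul_one]
        have h3 : J (x t) * ((J (x t))ᵀ * (J (x t) * (J (x t))ᵀ)⁻¹ * J (x t))
            = J (x t) := by
          rw [← Matrix.mul_assoc, h1, Matrix.one_mul]
        rw [h3, sub_self]
      rw [h1, h2]
      simp [Matrix.toEuclideanLin_apply]
    rw [← key]; exact h
  intro t ht
  obtain ⟨ht0, htT⟩ := ht
  -- the function w(t) = exp t • g(x t) is constant on the interval
  set w : ℝ → EuclideanSpace ℝ (Fin m) := fun t => Real.exp t • g (x t) with hw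
  have hw' : ∀ s ∈ Set.Ico (0 : ℝ) T, HasDerivAt w 0 s := by
    intro s hs
    have := (Real.hasDerivAt_exp s).smul (hy s hs)
    have h0 : Real.exp s • -g (x s) + Real.exp s • g (x s) = 0 := by simp [smul_neg]
    rw [h0] at this; exact this
  have hconst : w t = w 0 := by
    have hs : Convex ℝ (Set.Ico (0 : ℝ) T) := convex_Ico 0 T
    have hdiff : DifferentiableOn ℝ w (Set.Ico (0 : ℝ) T) := fun s hs =>
      ((hw' s hs).differentiableAt).differentiableWithinAt
    have hfd : ∀ s ∈ Set.Ico (0 : ℝ) T,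
        fderivWithin ℝ w (Set.Ico (0 : ℝ) T) s = 0 := by
      intro s hs
      have := ((hw' s hs).hasFDerivAt.hasFDerivWithinAt (s := Set.Ico (0 : ℝ) T)).fderivWithin
        (uniqueDiffOn_Ico 0 T s hs)
      rw [this]
      ext v
      simp
    exact hs.is_const_of_fderivWithin_eq_zero hdiff hfd ⟨ht0, htT⟩
      ⟨le_refl 0, lt_of_le_of_lt ht0 htT⟩
  have : Real.exp t • g (x t) = Real.exp 0 • g (x 0) := hconst
  rw [Real.exp_zero, one_smul] at this
  have h2 : g (x t) = (Real.exp t)⁻¹ • g (x 0) := by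
    rw [← this, inv_smul_smul₀ (Real.exp_ne_zero t)]
  rw [h2, ← Real.exp_neg]
end

section
/- Descent property on the feasible set: let x : [0, T) → ℝⁿ be a differentiable solution of x'(t) = ψ(x(t)) that remains in the feasible set (g(x(t)) = 0 for all t) and along which the Jacobian J(x(t)) has full row rank. Then the cost decreases along the trajectory: d/dt f(x(t)) = −‖P(x(t))∇f(x(t))‖² ≤ 0 for all t, where ‖·‖ is the Euclidean norm. -/
open Matrix

lemma projMat_symm {m n : ℕ} (J : Matrix (Fin m) (Fin n) ℝ) :
    (projMat J)ᵀ = projMat J := by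
  have hS : (J * Jᵀ)ᵀ = J * Jᵀ := by simp [Matrix.transpose_mul]
  simp [projMat, Matrix.transpose_sub, Matrix.transpose_mul, Matrix.transpose_nonsing_inv, hS,
    Matrix.mul_assoc]

lemma projMat_idem {m n : ℕ} (J : Matrix (Fin m) (Fin n) ℝ)
    (h : IsUnit (J * Jᵀ)) : projMat J * projMat J = projMat J := by
  have hd : IsUnit (J * Jᵀ).det := (Matrix.isUnit_iff_isUnit_det _).mp h
  have h1 : (J * Jᵀ)⁻¹ * (J * Jᵀ) = 1 := Matrix.nonsing_inv_mul _ hd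
  have key : (Jᵀ * (J * Jᵀ)⁻¹ * J) * (Jᵀ * (J * Jᵀ)⁻¹ * J) = Jᵀ * (J * Jᵀ)⁻¹ * J := by
    calc (Jᵀ * (J * Jᵀ)⁻¹ * J) * (Jᵀ * (J * Jᵀ)⁻¹ * J)
        = Jᵀ * (((J * Jᵀ)⁻¹ * (J * Jᵀ)) * ((J * Jᵀ)⁻¹ * J)) := by
          simp only [Matrix.mul_assoc]
      _ = Jᵀ * (J * Jᵀ)⁻¹ * J := by rw [h1]; simp [Matrix.mul_assoc]
  simp only [projMat, sub_mul, mul_sub, one_mul, mul_one, key]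
  abel

lemma toEuclideanLin_mul_apply {n : ℕ} (A B : Matrix (Fin n) (Fin n) ℝ)
    (v : EuclideanSpace ℝ (Fin n)) :
    Matrix.toEuclideanLin (A * B) v =
      Matrix.toEuclideanLin A (Matrix.toEuclideanLin B v) := by
  simp [Matrix.toEuclideanLin_apply, Matrix.mulVec_mulVec]

lemma inner_proj {m n : ℕ} (J : Matrix (Fin m) (Fin n) ℝ)
    (h : IsUnit (J * Jᵀ)) (v : EuclideanSpace ℝ (Fin n)) :
    (inner ℝ v (Matrix.toEuclideanLin (projMat J) v) : ℝ) =
      ‖Matrix.toEuclideanLin (projMat J) v‖ ^ 2 := by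
  set L := Matrix.toEuclideanLin (projMat J)
  have hadj : LinearMap.adjoint L = L := by
    rw [← Matrix.toEuclideanLin_conjTranspose_eq_adjoint,
      Matrix.conjTranspose_eq_transpose_of_trivial, projMat_symm]
  have : (inner ℝ (L v) (L v) : ℝ) = inner ℝ v (L v) := by
    rw [← LinearMap.adjoint_inner_left, hadj, ← toEuclideanLin_mul_apply,
      projMat_idem J h]
    exact real_inner_comm _ _
  rw [← this, real_inner_self_eq_norm_sq]

/-- Descent property on the feasible set: along any differentiable solution of
`x' = ψ(x)` on `[0, T)` that stays in the feasible set and along which the Jacobian has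
full row rank, `d/dt f(x(t)) = -‖P(x(t)) ∇f(x(t))‖² ≤ 0` (Euclidean norm). -/
theorem descent_on_feasible_set (m n : ℕ) (hmn : m < n)
    (f : EuclideanSpace ℝ (Fin n) → ℝ)
    (g : EuclideanSpace ℝ (Fin n) → EuclideanSpace ℝ (Fin m))
    (gradf : EuclideanSpace ℝ (Fin n) → EuclideanSpace ℝ (Fin n))
    (J : EuclideanSpace ℝ (Fin n) → Matrix (Fin m) (Fin n) ℝ)
    (hf : ContDiff ℝ 1 f) (hg : ContDiff ℝ 1 g)
    (hgrad : ∀ y, HasGradientAt f (gradf y) y)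
    (hJ : ∀ y, HasFDerivAt g
      (LinearMap.toContinuousLinearMap (Matrix.toEuclideanLin (J y))) y)
    (T : ℝ) (x : ℝ → EuclideanSpace ℝ (Fin n))
    (hx : ∀ t ∈ Set.Ico (0 : ℝ) T, HasDerivAt x (psi g gradf J (x t)) t)
    (hfeas : ∀ t ∈ Set.Ico (0 : ℝ) T, g (x t) = 0)
    (hrank : ∀ t ∈ Set.Ico (0 : ℝ) T, IsUnit (J (x t) * (J (x t))ᵀ)) :
    ∀ t ∈ Set.Ico (0 : ℝ) T,
      HasDerivAt (fun s => f (x s))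
        (-‖Matrix.toEuclideanLin (projMat (J (x t))) (gradf (x t))‖ ^ 2) t ∧
      -‖Matrix.toEuclideanLin (projMat (J (x t))) (gradf (x t))‖ ^ 2 ≤ 0 := by
  intro t ht
  refine ⟨?_, neg_nonpos.mpr (by positivity)⟩
  have hpsi : psi g gradf J (x t) =
      -(Matrix.toEuclideanLin (projMat (J (x t))) (gradf (x t))) := by
    simp [psi, hfeas t ht]
  have hcomp := ((hgrad (x t)).hasFDerivAt.comp_hasDerivAt t (hx t ht))
  refine hcomp.congr_deriv ?_
  rw [hpsi]
  simp only [InnerProductSpace.toDual_apply_apply, inner_neg_right]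
  rw [inner_proj _ (hrank t ht)]
end

section
/- Theorem 1: a feasible point x* ∈ FS_g (i.e., g(x*) = 0) at which the Jacobian J(x*) has full row rank is a critical point of the cost function f for the equality-constrained problem min f(x) subject to g(x) = 0 — meaning there exists λ ∈ ℝᵐ with ∇f(x*) + J(x*)ᵀλ = 0, equivalently P(x*)∇f(x*) = 0 — if and only if x* is an equilibrium point of the vector field ψ, i.e., ψ(x*) = 0. -/
open Matrix

lemma toEL_mul {k l p : ℕ} (A : Matrix (Fin k) (Fin l) ℝ) (B : Matrix (Fin l) (Fin p) ℝ)
    (v : EuclideanSpace ℝ (Fin p)) :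
    Matrix.toEuclideanLin (A * B) v = Matrix.toEuclideanLin A (Matrix.toEuclideanLin B v) := by
  simp [Matrix.toEuclideanLin_apply, Matrix.mulVec_mulVec]

/-- Theorem 1: a feasible point `x*` (with `g(x*) = 0`) at which the Jacobian has full
row rank is a critical point of `f` for the problem `min f s.t. g = 0` — i.e. there is
`λ` with `∇f(x*) + J(x*)ᵀ λ = 0`, equivalently `P(x*) ∇f(x*) = 0` — if and only if
`x*` is an equilibrium of `ψ`, i.e. `ψ(x*) = 0`. -/
theorem critical_iff_equilibrium (m n : ℕ) (hmn : m < n)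
    (f : EuclideanSpace ℝ (Fin n) → ℝ)
    (g : EuclideanSpace ℝ (Fin n) → EuclideanSpace ℝ (Fin m))
    (gradf : EuclideanSpace ℝ (Fin n) → EuclideanSpace ℝ (Fin n))
    (J : EuclideanSpace ℝ (Fin n) → Matrix (Fin m) (Fin n) ℝ)
    (hf : ContDiff ℝ 1 f) (hg : ContDiff ℝ 1 g)
    (hgrad : ∀ y, HasGradientAt f (gradf y) y)
    (hJ : ∀ y, HasFDerivAt g
      (LinearMap.toContinuousLinearMap (Matrix.toEuclideanLin (J y))) y)
    (xs : EuclideanSpace ℝ (Fin n)) (hfeas : g xs = 0)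
    (hrank : IsUnit (J xs * (J xs)ᵀ)) :
    ((∃ lam : EuclideanSpace ℝ (Fin m),
        gradf xs + Matrix.toEuclideanLin (J xs)ᵀ lam = 0) ↔ psi g gradf J xs = 0) ∧
    ((Matrix.toEuclideanLin (projMat (J xs)) (gradf xs) = 0) ↔ psi g gradf J xs = 0) := by
  have hdet : IsUnit (J xs * (J xs)ᵀ).det := (isUnit_iff_isUnit_det _).mp hrank
  have hinv : (J xs * (J xs)ᵀ)⁻¹ * (J xs * (J xs)ᵀ) = 1 := Matrix.nonsing_inv_mul _ hdet
  have hpsi : psi g gradf J xs = -(Matrix.toEuclideanLin (projMat (J xs)) (gradf xs)) := by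
    simp [psi, hfeas]
  have h2 : (Matrix.toEuclideanLin (projMat (J xs)) (gradf xs) = 0) ↔ psi g gradf J xs = 0 := by
    rw [hpsi, neg_eq_zero]
  refine ⟨?_, h2⟩
  rw [← h2]
  constructor
  · rintro ⟨lam, hlam⟩
    have hPJt : projMat (J xs) * (J xs)ᵀ = 0 := by
      have : (J xs)ᵀ * ((J xs * (J xs)ᵀ)⁻¹ * (J xs * (J xs)ᵀ)) = (J xs)ᵀ := by
        rw [hinv, Matrix.mul_one]
      calc projMat (J xs) * (J xs)ᵀ
          = (J xs)ᵀ - (J xs)ᵀ * (J xs * (J xs)ᵀ)⁻¹ * (J xs * (J xs)ᵀ) := by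
            simp [projMat, Matrix.sub_mul, Matrix.mul_assoc]
        _ = 0 := by rw [Matrix.mul_assoc, this, sub_self]
    have hgf : gradf xs = -(Matrix.toEuclideanLin (J xs)ᵀ lam) := by
      linear_combination (norm := module) hlam
    rw [hgf, map_neg, ← toEL_mul, hPJt]
    simp
  · intro hP
    have h1 : Matrix.toEuclideanLin ((J xs)ᵀ * ((J xs * (J xs)ᵀ)⁻¹ * J xs)) (gradf xs)
        = gradf xs := by
      have h := hP
      rw [projMat, Matrix.mul_assoc, map_sub, LinearMap.sub_apply, sub_eq_zero] at h
      rw [← h]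
      simp [Matrix.toEuclideanLin_apply, Matrix.one_mulVec]
    refine ⟨-(Matrix.toEuclideanLin ((J xs * (J xs)ᵀ)⁻¹ * J xs) (gradf xs)), ?_⟩
    rw [map_neg, ← toEL_mul, h1]
    simp
end

section
/- Theorem 2 (sufficiency part): suppose f and g are twice continuously differentiable, x* ∈ FS_g is an equilibrium of ψ at which the Jacobian J(x*) has full row rank, x* is an isolated critical point, and x* is a strict local minimizer of f on the feasible set FS_g (a regular minimal point). Then x* is an asymptotically stable equilibrium of the system x' = ψ(x): for every ε > 0 there exists δ > 0 such that every solution x(·) of x'(t) = ψ(x(t)) with ‖x(0) − x*‖ < δ exists for all t ≥ 0, satisfies ‖x(t) − x*‖ < ε for all t ≥ 0, and converges to x* as t → ∞. -/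
open Matrix
open Set

namespace Aux
variable {m n : ℕ}

lemma toEL_mul {k : ℕ} (A : Matrix (Fin m) (Fin n) ℝ) (B : Matrix (Fin n) (Fin k) ℝ)
    (v : EuclideanSpace ℝ (Fin k)) :
    Matrix.toEuclideanLin (A*B) v = Matrix.toEuclideanLin A (Matrix.toEuclideanLin B v) := by
  simp [Matrix.toEuclideanLin_apply, Matrix.mulVec_mulVec]

lemma toEL_one (v : EuclideanSpace ℝ (Fin n)) :
    Matrix.toEuclideanLin (1 : Matrix (Fin n) (Fin n) ℝ) v = v := by
  simp [Matrix.toEuclideanLin_apply]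

lemma inner_toEL (A : Matrix (Fin n) (Fin n) ℝ) (u v : EuclideanSpace ℝ (Fin n)) :
    inner ℝ u (Matrix.toEuclideanLin A v) = (inner ℝ (Matrix.toEuclideanLin Aᵀ u) v : ℝ) := by
  have h : ((u : Fin n → ℝ) ⬝ᵥ (A *ᵥ (v : Fin n → ℝ)))
      = ((Aᵀ *ᵥ (u : Fin n → ℝ)) ⬝ᵥ (v : Fin n → ℝ)) := by
    rw [Matrix.dotProduct_mulVec, Matrix.mulVec_transpose]
  simpa [Matrix.toEuclideanLin_apply, PiLp.inner_apply, RCLike.inner_apply, dotProduct,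
    mul_comm] using h

lemma J_mul_A (J : Matrix (Fin m) (Fin n) ℝ) (h : IsUnit (J * Jᵀ)) :
    J * (Jᵀ * (J * Jᵀ)⁻¹) = 1 := by
  rw [← Matrix.mul_assoc, Matrix.mul_nonsing_inv _ ((Matrix.isUnit_iff_isUnit_det _).mp h)]

lemma J_mul_proj (J : Matrix (Fin m) (Fin n) ℝ) (h : IsUnit (J * Jᵀ)) :
    J * projMat J = 0 := by
  have h2 := J_mul_A J h
  simp only [projMat, Matrix.mul_sub, Matrix.mul_one, ← Matrix.mul_assoc]
  rw [Matrix.mul_assoc J Jᵀ _] at *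
  rw [h2, Matrix.one_mul, sub_self]

lemma proj_transpose (J : Matrix (Fin m) (Fin n) ℝ) :
    (projMat J)ᵀ = projMat J := by
  simp [projMat, Matrix.transpose_sub, Matrix.transpose_mul, Matrix.transpose_nonsing_inv,
    Matrix.mul_assoc]

lemma proj_idem (J : Matrix (Fin m) (Fin n) ℝ) (h : IsUnit (J * Jᵀ)) :
    projMat J * projMat J = projMat J := by
  have h1 : (J * Jᵀ)⁻¹ * (J * Jᵀ) = 1 :=
    Matrix.nonsing_inv_mul _ ((Matrix.isUnit_iff_isUnit_det _).mp h)
  simp only [projMat, Matrix.sub_mul, Matrix.mul_sub, Matrix.one_mul, Matrix.mul_one]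
  have : Jᵀ * (J * Jᵀ)⁻¹ * J * (Jᵀ * (J * Jᵀ)⁻¹ * J) = Jᵀ * (J * Jᵀ)⁻¹ * J := by
    rw [show Jᵀ * (J * Jᵀ)⁻¹ * J * (Jᵀ * (J * Jᵀ)⁻¹ * J)
        = Jᵀ * ((J * Jᵀ)⁻¹ * (J * Jᵀ)) * ((J * Jᵀ)⁻¹ * J) by simp only [Matrix.mul_assoc], h1]
    simp [Matrix.mul_assoc]
  rw [this]
  abel

lemma inner_proj_self (J : Matrix (Fin m) (Fin n) ℝ) (h : IsUnit (J * Jᵀ))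
    (w : EuclideanSpace ℝ (Fin n)) :
    inner ℝ w (Matrix.toEuclideanLin (projMat J) w)
      = (‖Matrix.toEuclideanLin (projMat J) w‖ : ℝ)^2 := by
  rw [← real_inner_self_eq_norm_sq]
  rw [real_inner_comm (Matrix.toEuclideanLin (projMat J) w), inner_toEL, proj_transpose,
    ← toEL_mul, proj_idem J h, real_inner_comm]

/-- `J(y) ψ(y) = -g(y)` where `J y Jᵀ y` is invertible. -/
lemma J_psi (g : EuclideanSpace ℝ (Fin n) → EuclideanSpace ℝ (Fin m))
    (gradf : EuclideanSpace ℝ (Fin n) → EuclideanSpace ℝ (Fin n))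
    (J : EuclideanSpace ℝ (Fin n) → Matrix (Fin m) (Fin n) ℝ)
    (y : EuclideanSpace ℝ (Fin n)) (h : IsUnit (J y * (J y)ᵀ)) :
    Matrix.toEuclideanLin (J y) (psi g gradf J y) = -(g y) := by
  simp only [psi, map_sub, map_neg]
  rw [← toEL_mul, ← toEL_mul, J_mul_A _ h, J_mul_proj _ h, toEL_one]
  simp

/-- `⟪∇f(y), ψ(y)⟫ = -⟪∇f, A g⟫ - ‖P ∇f‖²`. -/
lemma inner_gradf_psi (g : EuclideanSpace ℝ (Fin n) → EuclideanSpace ℝ (Fin m))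
    (gradf : EuclideanSpace ℝ (Fin n) → EuclideanSpace ℝ (Fin n))
    (J : EuclideanSpace ℝ (Fin n) → Matrix (Fin m) (Fin n) ℝ)
    (y : EuclideanSpace ℝ (Fin n)) (h : IsUnit (J y * (J y)ᵀ)) :
    (inner ℝ (gradf y) (psi g gradf J y) : ℝ)
      = -(inner ℝ (gradf y) (Matrix.toEuclideanLin ((J y)ᵀ * (J y * (J y)ᵀ)⁻¹) (g y)))
        - ‖Matrix.toEuclideanLin (projMat (J y)) (gradf y)‖^2 := by
  simp only [psi, inner_sub_right, inner_neg_right]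
  rw [inner_proj_self _ h]

lemma antitoneOn_of_hasDerivAt {h φ : ℝ → ℝ} {a b : ℝ}
    (hd : ∀ t ∈ Icc a b, HasDerivAt h (φ t) t) (hφ : ∀ t ∈ Icc a b, φ t ≤ 0) :
    AntitoneOn h (Icc a b) := by
  apply antitoneOn_of_deriv_nonpos (convex_Icc a b)
  · exact fun t ht => (hd t ht).continuousAt.continuousWithinAt
  · intro t ht
    rw [interior_Icc] at ht
    exact (hd t (Ioo_subset_Icc_self ht)).differentiableAt.differentiableWithinAt
  · intro t ht
    rw [interior_Icc] at ht
    rw [(hd t (Ioo_subset_Icc_self ht)).deriv]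
    exact hφ t (Ioo_subset_Icc_self ht)

/-- Quantitative decrease: if `h' ≤ -c` on `[a,b]` then `h b ≤ h a - c (b - a)`. -/
lemma decay_of_hasDerivAt {h φ : ℝ → ℝ} {a b c : ℝ} (hab : a ≤ b)
    (hd : ∀ t ∈ Icc a b, HasDerivAt h (φ t) t) (hφ : ∀ t ∈ Icc a b, φ t ≤ -c) :
    h b ≤ h a - c * (b - a) := by
  have key : AntitoneOn (fun t => h t + c * t) (Icc a b) := by
    apply antitoneOn_of_hasDerivAt (φ := fun t => φ t + c)
    · intro t ht
      have h1 : HasDerivAt (fun t : ℝ => c * t) c t := by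
        simpa using (hasDerivAt_id t).const_mul c
      exact (hd t ht).add h1
    · intro t ht
      have := hφ t ht
      linarith
  have h2 := key (left_mem_Icc.mpr hab) (right_mem_Icc.mpr hab) hab
  simp only at h2
  nlinarith [h2]

lemma hasDerivAt_g_comp
    {g : EuclideanSpace ℝ (Fin n) → EuclideanSpace ℝ (Fin m)}
    {J : EuclideanSpace ℝ (Fin n) → Matrix (Fin m) (Fin n) ℝ}
    (hJ : ∀ y, HasFDerivAt g
      (LinearMap.toContinuousLinearMap (Matrix.toEuclideanLin (J y))) y)
    {x : ℝ → EuclideanSpace ℝ (Fin n)} {v : EuclideanSpace ℝ (Fin n)} {t : ℝ}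
    (hx : HasDerivAt x v t) :
    HasDerivAt (fun s => g (x s)) (Matrix.toEuclideanLin (J (x t)) v) t := by
  exact (hJ (x t)).comp_hasDerivAt t hx

lemma hasDerivAt_f_comp
    {f : EuclideanSpace ℝ (Fin n) → ℝ}
    {gradf : EuclideanSpace ℝ (Fin n) → EuclideanSpace ℝ (Fin n)}
    (hgrad : ∀ y, HasGradientAt f (gradf y) y)
    {x : ℝ → EuclideanSpace ℝ (Fin n)} {v : EuclideanSpace ℝ (Fin n)} {t : ℝ}
    (hx : HasDerivAt x v t) :
    HasDerivAt (fun s => f (x s)) (inner ℝ (gradf (x t)) v : ℝ) t := by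
  have := (hgrad (x t)).hasFDerivAt.comp_hasDerivAt t hx
  simp [InnerProductSpace.toDual_apply_apply] at this
  exact this

/-- exponential decay of the constraint along a trajectory staying in the invertible zone. -/
lemma g_decay
    {g : EuclideanSpace ℝ (Fin n) → EuclideanSpace ℝ (Fin m)}
    {gradf : EuclideanSpace ℝ (Fin n) → EuclideanSpace ℝ (Fin n)}
    {J : EuclideanSpace ℝ (Fin n) → Matrix (Fin m) (Fin n) ℝ}
    (hJ : ∀ y, HasFDerivAt g
      (LinearMap.toContinuousLinearMap (Matrix.toEuclideanLin (J y))) y)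
    {x : ℝ → EuclideanSpace ℝ (Fin n)} {T : ℝ}
    (hx : ∀ t ∈ Icc (0:ℝ) T, HasDerivAt x (psi g gradf J (x t)) t)
    (hinv : ∀ t ∈ Icc (0:ℝ) T, IsUnit (J (x t) * (J (x t))ᵀ)) :
    ∀ t ∈ Icc (0:ℝ) T, g (x t) = Real.exp (-t) • g (x 0) := by
  have hw : ∀ t ∈ Icc (0:ℝ) T,
      (fun s => Real.exp s • g (x s)) t = (fun s => Real.exp s • g (x s)) 0 := by
    apply constant_of_has_deriv_right_zero
    · intro t ht
      exact (((Real.hasDerivAt_exp t).smul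
        (hasDerivAt_g_comp hJ (hx t ht))).continuousAt).continuousWithinAt
    · intro t ht
      have hd := (Real.hasDerivAt_exp t).smul
        (hasDerivAt_g_comp hJ (hx t (Ico_subset_Icc_self ht)))
      rw [J_psi _ _ _ _ (hinv t (Ico_subset_Icc_self ht))] at hd
      have hd2 := hd.hasDerivWithinAt (s := Ici t)
      convert hd2 using 1
      · rfl
      · simp
  intro t ht
  have := hw t ht
  simp only [Real.exp_zero, one_smul] at this
  have h2 := congrArg (fun z => Real.exp (-t) • z) this
  simp only [smul_smul, ← Real.exp_add] at h2
  simpa using h2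

noncomputable def toCLMmat (m n : ℕ) :
    Matrix (Fin m) (Fin n) ℝ →ₗ[ℝ]
      (EuclideanSpace ℝ (Fin n) →L[ℝ] EuclideanSpace ℝ (Fin m)) :=
  (LinearMap.toContinuousLinearMap.toLinearMap).comp Matrix.toEuclideanLin.toLinearMap

lemma toCLMmat_apply (M : Matrix (Fin m) (Fin n) ℝ) (v : EuclideanSpace ℝ (Fin n)) :
    toCLMmat m n M v = Matrix.toEuclideanLin M v := by
  simp [toCLMmat]

lemma continuous_toCLMmat : Continuous (toCLMmat m n) :=
  (toCLMmat m n).continuous_of_finiteDimensional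

lemma norm_toEL_le (M : Matrix (Fin m) (Fin n) ℝ) (v : EuclideanSpace ℝ (Fin n)) :
    ‖Matrix.toEuclideanLin M v‖ ≤ ‖toCLMmat m n M‖ * ‖v‖ := by
  rw [← toCLMmat_apply]
  exact (toCLMmat m n M).le_opNorm v

lemma continuousOn_toEL {X : Type*} [TopologicalSpace X] {s : Set X}
    {Mf : X → Matrix (Fin m) (Fin n) ℝ} {vf : X → EuclideanSpace ℝ (Fin n)}
    (hM : ContinuousOn Mf s) (hv : ContinuousOn vf s) :
    ContinuousOn (fun y => Matrix.toEuclideanLin (Mf y) (vf y)) s := by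
  have : ContinuousOn (fun y => toCLMmat m n (Mf y) (vf y)) s :=
    (continuous_toCLMmat.comp_continuousOn hM).clm_apply hv
  simpa only [toCLMmat_apply] using this

lemma continuousOn_matrix_inv {k : ℕ} :
    ContinuousOn (fun A : Matrix (Fin k) (Fin k) ℝ => A⁻¹) {A | IsUnit A.det} := by
  have : ∀ A ∈ {A : Matrix (Fin k) (Fin k) ℝ | IsUnit A.det},
      A⁻¹ = (A.det)⁻¹ • A.adjugate := fun A _ => by
    rw [Matrix.inv_def, Ring.inverse_eq_inv']
  refine ContinuousOn.congr ?_ this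
  apply ContinuousOn.fun_smul
  · exact (continuous_id.matrix_det.continuousOn).inv₀ fun A hA => by
      simpa [isUnit_iff_ne_zero] using hA
  · exact continuous_id.matrix_adjugate.continuousOn

lemma continuousOn_matmul {X : Type*} [TopologicalSpace X] {s : Set X}
    {a b c : ℕ} {F : X → Matrix (Fin a) (Fin b) ℝ} {G : X → Matrix (Fin b) (Fin c) ℝ}
    (hF : ContinuousOn F s) (hG : ContinuousOn G s) :
    ContinuousOn (fun x => F x * G x) s :=
  ((continuous_fst.matrix_mul continuous_snd :
      Continuous fun p : Matrix (Fin a) (Fin b) ℝ × Matrix (Fin b) (Fin c) ℝ => p.1 * p.2)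
    ).comp_continuousOn' (f := fun x => (F x, G x)) (hF.prodMk hG)

lemma continuous_Jmat
    {g : EuclideanSpace ℝ (Fin n) → EuclideanSpace ℝ (Fin m)}
    {J : EuclideanSpace ℝ (Fin n) → Matrix (Fin m) (Fin n) ℝ} (hg : ContDiff ℝ 2 g)
    (hJ : ∀ y, HasFDerivAt g
      (LinearMap.toContinuousLinearMap (Matrix.toEuclideanLin (J y))) y) :
    Continuous J := by
  have hfd : Continuous (fun y => fderiv ℝ g y) := hg.continuous_fderiv (by norm_num)
  have hJy : ∀ y, J y = Matrix.toEuclideanLin.symm ((fderiv ℝ g y :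
      EuclideanSpace ℝ (Fin n) →ₗ[ℝ] EuclideanSpace ℝ (Fin m))) := by
    intro y
    rw [(hJ y).fderiv]
    simp
  rw [funext hJy]
  exact (((Matrix.toEuclideanLin.symm.toLinearMap).comp
    (ContinuousLinearMap.coeLM ℝ)).continuous_of_finiteDimensional).comp hfd

lemma continuous_gradfvec
    {f : EuclideanSpace ℝ (Fin n) → ℝ} {gradf : EuclideanSpace ℝ (Fin n) → EuclideanSpace ℝ (Fin n)}
    (hf : ContDiff ℝ 2 f) (hgrad : ∀ y, HasGradientAt f (gradf y) y) :
    Continuous gradf := by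
  have hfd : Continuous (fun y => fderiv ℝ f y) := hf.continuous_fderiv (by norm_num)
  have h : ∀ y, gradf y = (InnerProductSpace.toDual ℝ _).symm (fderiv ℝ f y) := by
    intro y
    rw [(hgrad y).hasFDerivAt.fderiv]
    simp
  rw [funext h]
  exact (InnerProductSpace.toDual ℝ _).symm.continuous.comp hfd

end Aux

set_option maxHeartbeats 2000000 in
/-- Theorem 2 (sufficiency): if `f, g` are twice continuously differentiable, `x*` is a
feasible equilibrium of `ψ` with full-row-rank Jacobian, `x*` is an isolated critical
point of the constrained problem, and `x*` is a strict local minimizer of `f` on the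
feasible set, then `x*` is an asymptotically stable equilibrium of `x' = ψ(x)`: for every
`ε > 0` there is `δ > 0` such that every solution starting within `δ` of `x*` stays
within `ε` of `x*` for all `t ≥ 0` and converges to `x*` as `t → ∞`. -/
theorem strict_local_min_asymptotically_stable (m n : ℕ) (hmn : m < n)
    (f : EuclideanSpace ℝ (Fin n) → ℝ)
    (g : EuclideanSpace ℝ (Fin n) → EuclideanSpace ℝ (Fin m))
    (gradf : EuclideanSpace ℝ (Fin n) → EuclideanSpace ℝ (Fin n))
    (J : EuclideanSpace ℝ (Fin n) → Matrix (Fin m) (Fin n) ℝ)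
    (hf : ContDiff ℝ 2 f) (hg : ContDiff ℝ 2 g)
    (hgrad : ∀ y, HasGradientAt f (gradf y) y)
    (hJ : ∀ y, HasFDerivAt g
      (LinearMap.toContinuousLinearMap (Matrix.toEuclideanLin (J y))) y)
    (xs : EuclideanSpace ℝ (Fin n))
    (hfeas : g xs = 0)
    (heq : psi g gradf J xs = 0)
    (hrank : IsUnit (J xs * (J xs)ᵀ))
    (hisolated : ∃ r > (0 : ℝ), ∀ y : EuclideanSpace ℝ (Fin n), ‖y - xs‖ < r → y ≠ xs →
      ¬(g y = 0 ∧ Matrix.toEuclideanLin (projMat (J y)) (gradf y) = 0))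
    (hstrictmin : ∃ r > (0 : ℝ), ∀ y : EuclideanSpace ℝ (Fin n), ‖y - xs‖ < r →
      g y = 0 → y ≠ xs → f xs < f y) :
    ∀ ε > (0 : ℝ), ∃ δ > (0 : ℝ), ∀ x : ℝ → EuclideanSpace ℝ (Fin n),
      (∀ t : ℝ, 0 ≤ t → HasDerivAt x (psi g gradf J (x t)) t) →
      ‖x 0 - xs‖ < δ →
      (∀ t : ℝ, 0 ≤ t → ‖x t - xs‖ < ε) ∧
      Filter.Tendsto x Filter.atTop (nhds xs) := by
  obtain ⟨r1, hr1, hiso⟩ := hisolated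
  obtain ⟨r2, hr2, hmin⟩ := hstrictmin
  intro ε hε
  -- continuity of the data
  have hJc : Continuous J := Aux.continuous_Jmat hg hJ
  have hgradc : Continuous gradf := Aux.continuous_gradfvec hf hgrad
  have hgc : Continuous g := hg.continuous
  have hfc : Continuous f := hf.continuous
  -- open set where J Jᵀ is invertible
  set U : Set (EuclideanSpace ℝ (Fin n)) := {y | (J y * (J y)ᵀ).det ≠ 0} with hU
  have hUopen : IsOpen U := by
    have : Continuous fun y => (J y * (J y)ᵀ).det :=
      (hJc.matrix_mul hJc.matrix_transpose).matrix_det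
    exact isOpen_compl_singleton.preimage this
  have hxsU : xs ∈ U := by
    simpa [hU, isUnit_iff_ne_zero] using (Matrix.isUnit_iff_isUnit_det _).mp hrank
  obtain ⟨ρ0, hρ0, hballU⟩ := Metric.isOpen_iff.mp hUopen xs hxsU
  -- radius of the working ball
  set ρ : ℝ := min (min (ρ0/2) (ε/2)) (min (r1/2) (r2/2)) with hρdef
  have hρpos : 0 < ρ := by positivity
  have hρε : ρ < ε := by
    have : ρ ≤ ε/2 := le_trans (min_le_left _ _) (min_le_right _ _)
    linarith
  have hρr1 : ρ < r1 := by
    have : ρ ≤ r1/2 := le_trans (min_le_right _ _) (min_le_left _ _)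
    linarith
  have hρr2 : ρ < r2 := by
    have : ρ ≤ r2/2 := le_trans (min_le_right _ _) (min_le_right _ _)
    linarith
  set K : Set (EuclideanSpace ℝ (Fin n)) := Metric.closedBall xs ρ with hK
  have hKU : K ⊆ U := by
    intro y hy
    apply hballU
    have : ρ ≤ ρ0/2 := le_trans (min_le_left _ _) (min_le_left _ _)
    calc dist y xs ≤ ρ := Metric.mem_closedBall.mp hy
    _ < ρ0 := by linarith
  have hKcpt : IsCompact K := isCompact_closedBall xs ρ
  have hKinv : ∀ y ∈ K, IsUnit (J y * (J y)ᵀ) := fun y hy =>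
    (Matrix.isUnit_iff_isUnit_det _).mpr (isUnit_iff_ne_zero.mpr (hKU hy))
  -- continuity of auxiliary maps on U
  have hinvc : ContinuousOn (fun y => (J y * (J y)ᵀ)⁻¹) U := by
    apply Aux.continuousOn_matrix_inv.comp
      ((hJc.matrix_mul hJc.matrix_transpose).continuousOn)
    intro y hy
    simpa [hU, isUnit_iff_ne_zero] using hy
  have hAc : ContinuousOn (fun y => (J y)ᵀ * (J y * (J y)ᵀ)⁻¹) U :=
    Aux.continuousOn_matmul (hJc.matrix_transpose.continuousOn) hinvc
  have hPc : ContinuousOn (fun y => projMat (J y)) U := by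
    unfold projMat
    exact continuousOn_const.sub (Aux.continuousOn_matmul hAc hJc.continuousOn)
  have hψc : ContinuousOn (psi g gradf J) U := by
    unfold psi
    exact ((Aux.continuousOn_toEL hAc hgc.continuousOn).neg).sub
      (Aux.continuousOn_toEL hPc hgradc.continuousOn)
  set Pg : EuclideanSpace ℝ (Fin n) → EuclideanSpace ℝ (Fin n) :=
    fun y => Matrix.toEuclideanLin (projMat (J y)) (gradf y) with hPg
  have hPgc : ContinuousOn Pg U := Aux.continuousOn_toEL hPc hgradc.continuousOn
  -- bounds on K
  obtain ⟨CA, hCA⟩ := hKcpt.exists_bound_of_continuousOn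
    ((Aux.continuous_toCLMmat.comp_continuousOn hAc).mono hKU)
  obtain ⟨CF, hCF⟩ := hKcpt.exists_bound_of_continuousOn (hgradc.continuousOn (s := K))
  obtain ⟨CS, hCS⟩ := hKcpt.exists_bound_of_continuousOn (hψc.mono hKU)
  have hCA0 : 0 ≤ max CA 0 := le_max_right _ _
  have hCF0 : 0 ≤ max CF 0 := le_max_right _ _
  set c1 : ℝ := (max CA 0) * (max CF 0) with hc1
  have hc10 : 0 ≤ c1 := mul_nonneg hCA0 hCF0
  -- key differential inequality bound, pointwise on K
  have hkey : ∀ y ∈ K, (inner ℝ (gradf y) (psi g gradf J y) : ℝ)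
      ≤ c1 * ‖g y‖ - ‖Pg y‖^2 := by
    intro y hy
    rw [Aux.inner_gradf_psi g gradf J y (hKinv y hy)]
    have h1 : |(inner ℝ (gradf y) (Matrix.toEuclideanLin
        ((J y)ᵀ * (J y * (J y)ᵀ)⁻¹) (g y)) : ℝ)| ≤ c1 * ‖g y‖ := by
      calc |(inner ℝ (gradf y) (Matrix.toEuclideanLin ((J y)ᵀ * (J y * (J y)ᵀ)⁻¹) (g y)) : ℝ)|
          ≤ ‖gradf y‖ * ‖Matrix.toEuclideanLin ((J y)ᵀ * (J y * (J y)ᵀ)⁻¹) (g y)‖ :=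
            abs_real_inner_le_norm _ _
        _ ≤ ‖gradf y‖ * (‖Aux.toCLMmat n m ((J y)ᵀ * (J y * (J y)ᵀ)⁻¹)‖ * ‖g y‖) := by
            apply mul_le_mul_of_nonneg_left (Aux.norm_toEL_le _ _) (norm_nonneg _)
        _ ≤ c1 * ‖g y‖ := by
            have h2 := hCA y hy
            simp only [Function.comp_apply] at h2
            have hA' : ‖Aux.toCLMmat n m ((J y)ᵀ * (J y * (J y)ᵀ)⁻¹)‖ ≤ max CA 0 :=
              le_trans h2 (le_max_left _ _)
            have hF' : ‖gradf y‖ ≤ max CF 0 := le_trans (hCF y hy) (le_max_left _ _)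
            have hgn : (0:ℝ) ≤ ‖g y‖ := norm_nonneg _
            have hfin := mul_le_mul hF' (mul_le_mul_of_nonneg_right hA' hgn)
              (by positivity) hCF0
            rw [hc1]
            nlinarith [hfin]
    have := abs_le.mp h1
    simp only [hPg]
    linarith [this.1]
  -- the sphere of radius ρ and the barrier constant
  set S : Set (EuclideanSpace ℝ (Fin n)) := Metric.sphere xs ρ with hS
  have hScpt : IsCompact S := isCompact_sphere xs ρ
  have hSK : S ⊆ K := Metric.sphere_subset_closedBall
  have hSne : S.Nonempty := by
    refine ⟨xs + (EuclideanSpace.single (⟨0, by omega⟩ : Fin n) ρ), ?_⟩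
    simp [hS, Metric.mem_sphere, dist_eq_norm, EuclideanSpace.norm_single, abs_of_pos hρpos]
  -- positivity of the Lyapunov function on the sphere, for a suitable constant C
  have hbarrier : ∃ C : ℝ, c1 ≤ C ∧ 0 ≤ C ∧
      ∀ y ∈ S, 0 < f y - f xs + C * ‖g y‖ := by
    have hsphere_ne : ∀ y ∈ S, y ≠ xs := by
      intro y hy h
      have hd : dist y xs = ρ := Metric.mem_sphere.mp hy
      rw [h, dist_self] at hd
      exact absurd hd.symm (ne_of_gt hρpos)
    have hsphere_min : ∀ y ∈ S, g y = 0 → f xs < f y := by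
      intro y hy hgy
      apply hmin y _ hgy (hsphere_ne y hy)
      have : dist y xs = ρ := Metric.mem_sphere.mp hy
      rw [← dist_eq_norm, this]
      exact hρr2
    set Z : Set (EuclideanSpace ℝ (Fin n)) := {y ∈ S | f y - f xs ≤ 0} with hZ
    have hZcpt : IsCompact Z := by
      apply hScpt.of_isClosed_subset
      · exact IsClosed.inter Metric.isClosed_sphere
          (isClosed_le (hfc.sub continuous_const) continuous_const)
      · exact fun y hy => hy.1
    by_cases hZne : Z.Nonempty
    · obtain ⟨y0, hy0Z, hy0min⟩ := hZcpt.exists_isMinOn hZne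
        ((continuous_norm.comp hgc).continuousOn)
      set β : ℝ := ‖g y0‖ with hβ
      have hβpos : 0 < β := by
        rcases eq_or_lt_of_le (norm_nonneg (g y0)) with h | h
        · exfalso
          have hg0 : g y0 = 0 := by rwa [eq_comm, norm_eq_zero] at h
          have h1 := hsphere_min y0 hy0Z.1 hg0
          have h2 : f y0 - f xs ≤ 0 := hy0Z.2
          linarith
        · exact h
      obtain ⟨M, hM⟩ := hScpt.exists_bound_of_continuousOn
        ((hfc.sub continuous_const).continuousOn)
      set C : ℝ := max (max c1 0) ((M+1)/β) with hC
      refine ⟨C, le_trans (le_max_left _ _) (le_max_left _ _),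
        le_trans (le_max_right _ _) (le_max_left _ _), ?_⟩
      intro y hy
      by_cases hfy : f y - f xs ≤ 0
      · have hyZ : y ∈ Z := ⟨hy, hfy⟩
        have hβy : β ≤ ‖g y‖ := hy0min hyZ
        have hMy : |f y - f xs| ≤ M := by simpa using hM y hy
        have hMpos : 0 ≤ M := le_trans (abs_nonneg _) hMy
        have hCβ : (M+1)/β ≤ C := le_max_right _ _
        have : (M+1) ≤ C * β := by
          rw [div_le_iff₀ hβpos] at hCβ
          linarith
        have hC0 : (0:ℝ) ≤ C := le_trans (le_max_right _ _) (le_max_left _ _)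
        have := abs_le.mp hMy
        nlinarith [mul_le_mul_of_nonneg_left hβy hC0]
      · push_neg at hfy
        have hC0 : (0:ℝ) ≤ C := le_trans (le_max_right _ _) (le_max_left _ _)
        nlinarith [mul_nonneg hC0 (norm_nonneg (g y))]
    · refine ⟨max c1 0, le_max_left _ _, le_max_right _ _, ?_⟩
      intro y hy
      have hfy : 0 < f y - f xs := by
        by_contra h
        push_neg at h
        exact hZne ⟨y, hy, h⟩
      nlinarith [mul_nonneg (le_max_right c1 0) (norm_nonneg (g y))]
  obtain ⟨C, hCc1, hC0, hCpos⟩ := hbarrier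
  -- the Lyapunov function and its minimum on the sphere
  set V : EuclideanSpace ℝ (Fin n) → ℝ := fun y => f y - f xs + C * ‖g y‖ with hV
  have hVc : Continuous V := by
    apply (hfc.sub continuous_const).add (continuous_const.mul (continuous_norm.comp hgc))
  obtain ⟨y1, hy1S, hy1min⟩ := hScpt.exists_isMinOn hSne hVc.continuousOn
  set α : ℝ := V y1 with hα
  have hαpos : 0 < α := hCpos y1 hy1S
  have hVxs : V xs = 0 := by simp [hV, hfeas]
  -- choice of δ
  have hVcont : ContinuousAt V xs := hVc.continuousAt
  obtain ⟨δ1, hδ1, hδV⟩ := Metric.continuousAt_iff.mp hVcont α hαpos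
  set δ : ℝ := min δ1 ρ with hδ
  have hδpos : 0 < δ := lt_min hδ1 hρpos
  refine ⟨δ, hδpos, ?_⟩
  intro x hsol hx0
  -- trajectory continuity at nonnegative times
  have hxcont : ∀ t : ℝ, 0 ≤ t → ContinuousAt x t := fun t ht => (hsol t ht).continuousAt
  have hx0ρ : ‖x 0 - xs‖ < ρ := lt_of_lt_of_le hx0 (min_le_right _ _)
  have hVx0 : V (x 0) < α := by
    have h1 := hδV (show dist (x 0) xs < δ1 by
      rw [dist_eq_norm]; exact lt_of_lt_of_le hx0 (min_le_left _ _))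
    rw [hVxs] at h1
    have h2 := (abs_lt.mp (by simpa [Real.dist_eq] using h1)).2
    linarith
  -- bootstrap estimates while the trajectory stays in K
  have boot : ∀ T, 0 ≤ T → (∀ s ∈ Set.Icc (0:ℝ) T, x s ∈ K) →
      (∀ s ∈ Set.Icc (0:ℝ) T, g (x s) = Real.exp (-s) • g (x 0)) ∧ V (x T) ≤ V (x 0) := by
    intro T hT hKmem
    have hsol' : ∀ s ∈ Set.Icc (0:ℝ) T, HasDerivAt x (psi g gradf J (x s)) s :=
      fun s hs => hsol s hs.1
    have hinv' : ∀ s ∈ Set.Icc (0:ℝ) T, IsUnit (J (x s) * (J (x s))ᵀ) :=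
      fun s hs => hKinv _ (hKmem s hs)
    have hgd := Aux.g_decay hJ hsol' hinv'
    refine ⟨hgd, ?_⟩
    set G0 : ℝ := ‖g (x 0)‖ with hG0
    have hG0n : 0 ≤ G0 := norm_nonneg _
    have hgnorm : ∀ s ∈ Set.Icc (0:ℝ) T, ‖g (x s)‖ = Real.exp (-s) * G0 := by
      intro s hs
      rw [hgd s hs, norm_smul, Real.norm_eq_abs, abs_of_pos (Real.exp_pos _)]
    have hder : ∀ s ∈ Set.Icc (0:ℝ) T,
        HasDerivAt (fun u => f (x u) + c1 * G0 * Real.exp (-u))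
          ((inner ℝ (gradf (x s)) (psi g gradf J (x s)) : ℝ)
            + c1 * G0 * (-Real.exp (-s))) s := by
      intro s hs
      have h1 := Aux.hasDerivAt_f_comp hgrad (hsol' s hs)
      have h2 : HasDerivAt (fun u : ℝ => Real.exp (-u)) (-Real.exp (-s)) s := by
        convert (hasDerivAt_neg' s).exp using 1; ring
      have h3 : HasDerivAt (fun u : ℝ => c1 * G0 * Real.exp (-u)) (c1 * G0 * (-Real.exp (-s))) s :=
        h2.const_mul (c1 * G0)
      exact h1.add h3
    have hderneg : ∀ s ∈ Set.Icc (0:ℝ) T,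
        (inner ℝ (gradf (x s)) (psi g gradf J (x s)) : ℝ) + c1 * G0 * (-Real.exp (-s)) ≤ 0 := by
      intro s hs
      have hk := hkey _ (hKmem s hs)
      rw [hgnorm s hs] at hk
      nlinarith [sq_nonneg ‖Pg (x s)‖]
    have hanti := Aux.antitoneOn_of_hasDerivAt hder hderneg
    have hT0 := hanti (Set.left_mem_Icc.mpr hT) (Set.right_mem_Icc.mpr hT) hT
    simp only [neg_zero, Real.exp_zero, mul_one] at hT0
    have hgT : ‖g (x T)‖ = Real.exp (-T) * G0 := hgnorm T (Set.right_mem_Icc.mpr hT)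
    have hexple : Real.exp (-T) ≤ 1 := Real.exp_le_one_iff.mpr (by linarith)
    have hexppos : (0:ℝ) < Real.exp (-T) := Real.exp_pos _
    simp only [hV]
    rw [hgT]
    nlinarith [mul_nonneg (mul_nonneg (sub_nonneg.mpr hCc1) (sub_nonneg.mpr hexple)) hG0n,
      Real.exp_zero]
  -- the trajectory can never leave the open ball of radius ρ
  have hstay : ∀ t, 0 ≤ t → ‖x t - xs‖ < ρ := by
    by_contra hcon
    push_neg at hcon
    obtain ⟨t1, ht1, ht1ρ⟩ := hcon
    set B : Set ℝ := {t | 0 ≤ t ∧ ρ ≤ ‖x t - xs‖} with hB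
    have hBne : B.Nonempty := ⟨t1, ht1, ht1ρ⟩
    have hBbdd : BddBelow B := ⟨0, fun t ht => ht.1⟩
    set t0 : ℝ := sInf B with ht0
    have ht00 : 0 ≤ t0 := le_csInf hBne (fun t ht => ht.1)
    have ht0B : t0 ∈ B := by
      obtain ⟨u, humono, hulim, huB⟩ := exists_seq_tendsto_sInf hBne hBbdd
      refine ⟨ht00, ?_⟩
      have hxc : ContinuousAt (fun t => ‖x t - xs‖) t0 :=
        ((hxcont t0 ht00).sub continuousAt_const).norm
      have htd : Filter.Tendsto (fun k => ‖x (u k) - xs‖) Filter.atTop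
          (nhds ‖x t0 - xs‖) := hxc.tendsto.comp hulim
      exact ge_of_tendsto htd (Filter.Eventually.of_forall fun k => (huB k).2)
    have ht0pos : 0 < t0 := by
      rcases eq_or_lt_of_le ht00 with h | h
      · exfalso
        have := ht0B.2
        rw [← h] at this
        exact absurd this (not_le.mpr hx0ρ)
      · exact h
    have hlt : ∀ s, 0 ≤ s → s < t0 → ‖x s - xs‖ < ρ := by
      intro s hs hst
      by_contra hge
      push_neg at hge
      exact absurd (csInf_le hBbdd ⟨hs, hge⟩) (not_le.mpr hst)
    have ht0le : ‖x t0 - xs‖ ≤ ρ := by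
      have hxc : ContinuousAt (fun t => ‖x t - xs‖) t0 :=
        ((hxcont t0 ht00).sub continuousAt_const).norm
      have hclos : t0 ∈ closure (Set.Ico 0 t0) := by
        rw [closure_Ico (ne_of_lt ht0pos)]
        exact ⟨ht00, le_refl t0⟩
      have hne : (nhdsWithin t0 (Set.Ico 0 t0)).NeBot :=
        mem_closure_iff_nhdsWithin_neBot.mp hclos
      exact le_of_tendsto (hxc.continuousWithinAt.tendsto)
        (eventually_nhdsWithin_of_forall fun s (hs : s ∈ Set.Ico 0 t0) => (hlt s hs.1 hs.2).le)
    have hle : ∀ s ∈ Set.Icc (0:ℝ) t0, x s ∈ K := by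
      intro s hs
      rcases lt_or_eq_of_le hs.2 with h | h
      · exact Metric.mem_closedBall.mpr (by rw [dist_eq_norm]; exact (hlt s hs.1 h).le)
      · rw [h]
        exact Metric.mem_closedBall.mpr (by rw [dist_eq_norm]; exact ht0le)
    obtain ⟨hgd, hVT⟩ := boot t0 ht00 hle
    have hxt0S : x t0 ∈ S := by
      have h1 : ‖x t0 - xs‖ = ρ := le_antisymm ht0le ht0B.2
      simp only [hS, Metric.mem_sphere, dist_eq_norm]
      exact h1
    have hαV : α ≤ V (x t0) := hy1min hxt0S
    linarith
  refine ⟨fun t ht => lt_trans (hstay t ht) hρε, ?_⟩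
  -- global consequences of invariance
  have hKall : ∀ t, 0 ≤ t → x t ∈ K := fun t ht =>
    Metric.mem_closedBall.mpr (by rw [dist_eq_norm]; exact (hstay t ht).le)
  have hgall : ∀ t, 0 ≤ t → g (x t) = Real.exp (-t) • g (x 0) := fun t ht =>
    (boot t ht (fun s hs => hKall s hs.1)).1 t (Set.right_mem_Icc.mpr ht)
  set G0 : ℝ := ‖g (x 0)‖ with hG0
  have hG0n : 0 ≤ G0 := norm_nonneg _
  have hgnorm : ∀ t, 0 ≤ t → ‖g (x t)‖ = Real.exp (-t) * G0 := by
    intro t ht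
    rw [hgall t ht, norm_smul, Real.norm_eq_abs, abs_of_pos (Real.exp_pos _)]
  set W : ℝ → ℝ := fun t => f (x t) + c1 * G0 * Real.exp (-t) with hW
  set Wd : ℝ → ℝ := fun s => (inner ℝ (gradf (x s)) (psi g gradf J (x s)) : ℝ)
    + c1 * G0 * (-Real.exp (-s)) with hWd
  have hWder : ∀ s, 0 ≤ s → HasDerivAt W (Wd s) s := by
    intro s hs
    have h1 := Aux.hasDerivAt_f_comp hgrad (hsol s hs)
    have h2 : HasDerivAt (fun u : ℝ => Real.exp (-u)) (-Real.exp (-s)) s := by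
      convert (hasDerivAt_neg' s).exp using 1; ring
    exact h1.add (h2.const_mul (c1 * G0))
  have hWdle : ∀ s, 0 ≤ s → Wd s ≤ -‖Pg (x s)‖^2 := by
    intro s hs
    have hk := hkey _ (hKall s hs)
    rw [hgnorm s hs] at hk
    simp only [hWd]
    nlinarith []
  have hWanti : ∀ p q : ℝ, 0 ≤ p → p ≤ q → W q ≤ W p := by
    intro p q hp hpq
    exact Aux.antitoneOn_of_hasDerivAt
      (fun s hs => hWder s (le_trans hp hs.1))
      (fun s hs => le_trans (hWdle s (le_trans hp hs.1)) (neg_nonpos.mpr (sq_nonneg _)))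
      (Set.left_mem_Icc.mpr hpq) (Set.right_mem_Icc.mpr hpq) hpq
  obtain ⟨Mf, hMf⟩ := hKcpt.exists_bound_of_continuousOn hfc.continuousOn
  have hWlb : ∀ t, 0 ≤ t → -Mf ≤ W t := by
    intro t ht
    have h1 := (abs_le.mp (by simpa using hMf (x t) (hKall t ht))).1
    have h2 : 0 ≤ c1 * G0 * Real.exp (-t) :=
      mul_nonneg (mul_nonneg hc10 hG0n) (Real.exp_pos _).le
    simp only [hW]
    linarith
  -- convergence
  rw [Metric.tendsto_atTop]
  by_contra hcon
  push_neg at hcon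
  obtain ⟨ε', hε', hfreq⟩ := hcon
  set tseq : ℕ → ℝ := fun k => (hfreq k).choose with htseq
  have htk1 : ∀ k : ℕ, (k:ℝ) ≤ tseq k := fun k => (hfreq k).choose_spec.1
  have htk2 : ∀ k : ℕ, ε' ≤ dist (x (tseq k)) xs := fun k => (hfreq k).choose_spec.2
  have htknn : ∀ k : ℕ, 0 ≤ tseq k := fun k => le_trans (Nat.cast_nonneg k) (htk1 k)
  set K' : Set (EuclideanSpace ℝ (Fin n)) := K ∩ {y | ε' ≤ dist y xs} with hK'
  have hK'cpt : IsCompact K' := hKcpt.inter_right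
    (isClosed_le continuous_const (continuous_id.dist continuous_const))
  have hmemK' : ∀ k : ℕ, x (tseq k) ∈ K' := fun k => ⟨hKall _ (htknn k), htk2 k⟩
  obtain ⟨y, hyK', φ, hφmono, hφlim⟩ := hK'cpt.tendsto_subseq hmemK'
  have hyK : y ∈ K := hyK'.1
  have hyne : y ≠ xs := by
    intro h
    have h2 := hyK'.2
    simp only [Set.mem_setOf_eq, h, dist_self] at h2
    linarith
  have htφatTop : Filter.Tendsto (fun k => tseq (φ k)) Filter.atTop Filter.atTop := by
    apply Filter.tendsto_atTop_mono (fun k => le_trans (Nat.cast_le.mpr (hφmono.le_apply)) (htk1 (φ k)))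
    exact tendsto_natCast_atTop_atTop
  have hyg : g y = 0 := by
    have h1 : Filter.Tendsto (fun k => g (x (tseq (φ k)))) Filter.atTop (nhds (g y)) :=
      (hgc.continuousAt.tendsto).comp hφlim
    have h2 : Filter.Tendsto (fun k => Real.exp (-(tseq (φ k))) • g (x 0))
        Filter.atTop (nhds ((0:ℝ) • g (x 0))) := by
      apply Filter.Tendsto.smul_const
      exact Real.tendsto_exp_atBot.comp (Filter.tendsto_neg_atTop_atBot.comp htφatTop)
    rw [zero_smul] at h2
    have h3 : (fun k => g (x (tseq (φ k)))) = fun k => Real.exp (-(tseq (φ k))) • g (x 0) :=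
      funext fun k => hgall _ (htknn (φ k))
    rw [h3] at h1
    exact tendsto_nhds_unique h1 h2
  have hPgy : Pg y ≠ 0 := by
    intro h
    apply hiso y _ hyne ⟨hyg, h⟩
    have : dist y xs ≤ ρ := Metric.mem_closedBall.mp hyK
    rw [← dist_eq_norm]
    linarith
  set aPg : ℝ := ‖Pg y‖ with haPg
  have haPgpos : 0 < aPg := norm_pos_iff.mpr hPgy
  have hPgcy : ContinuousAt Pg y := hPgc.continuousAt (hUopen.mem_nhds (hKU hyK))
  have hev : ∀ᶠ z in nhds y, aPg/2 < ‖Pg z‖ :=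
    (hPgcy.norm).eventually (eventually_gt_nhds (by linarith))
  obtain ⟨η, hη, hηball⟩ := Metric.eventually_nhds_iff.mp hev
  set CS' : ℝ := max CS 1 with hCS'
  have hCS'pos : (0:ℝ) < CS' := lt_of_lt_of_le one_pos (le_max_right _ _)
  have hCS'bd : ∀ z ∈ K, ‖psi g gradf J z‖ ≤ CS' := fun z hz =>
    le_trans (hCS z hz) (le_max_left _ _)
  set τ : ℝ := η / (2 * CS') with hτ
  have hτpos : 0 < τ := by positivity
  have hτCS : CS' * τ ≤ η / 2 := by
    have : CS' * (η / (2 * CS')) = η / 2 := by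
      field_simp
    exact le_of_eq this
  -- movement bound and local decay
  have hdecay : ∀ t, 0 ≤ t → dist (x t) y < η/2 →
      W (t + τ) ≤ W t - (aPg/2)^2 * τ := by
    intro t ht hnear
    have hmove : ∀ s ∈ Set.Icc t (t + τ), ‖x s - x t‖ ≤ CS' * (s - t) := by
      apply norm_image_sub_le_of_norm_deriv_le_segment'
        (f' := fun s => psi g gradf J (x s))
      · intro s hs
        exact (hsol s (le_trans ht hs.1)).hasDerivWithinAt
      · intro s hs
        exact hCS'bd _ (hKall s (le_trans ht hs.1))
    have hPgbig : ∀ s ∈ Set.Icc t (t + τ), aPg/2 < ‖Pg (x s)‖ := by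
      intro s hs
      apply hηball
      have h1 : ‖x s - x t‖ ≤ CS' * (s - t) := hmove s hs
      have h2 : CS' * (s - t) ≤ CS' * τ := by
        apply mul_le_mul_of_nonneg_left _ hCS'pos.le
        have := hs.2
        linarith
      calc dist (x s) y ≤ dist (x s) (x t) + dist (x t) y := dist_triangle _ _ _
        _ < η/2 + η/2 := by
            apply add_lt_add_of_le_of_lt _ hnear
            rw [dist_eq_norm]
            exact le_trans h1 (le_trans h2 hτCS) -- gives ≤ η/2, need < : use add_lt_add_of_le_of_lt
        _ = η := by ring
    have := Aux.decay_of_hasDerivAt (h := W) (φ := Wd) (a := t) (b := t + τ)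
      (c := (aPg/2)^2) (by linarith)
      (fun s hs => hWder s (le_trans ht hs.1))
      (fun s hs => by
        have h1 := hWdle s (le_trans ht hs.1)
        have h2 : (aPg/2)^2 ≤ ‖Pg (x s)‖^2 :=
          pow_le_pow_left₀ (by positivity) (hPgbig s hs).le 2
        exact le_trans h1 (neg_le_neg h2))
    have harith : t + τ - t = τ := by ring
    rw [harith] at this
    exact this
  -- recursively chosen times
  have hstep : ∀ N : ℝ, ∃ u, N ≤ u ∧ 0 ≤ u ∧ dist (x u) y < η/2 := by
    intro N
    obtain ⟨k0, hk0⟩ := (Metric.tendsto_atTop.mp hφlim) (η/2) (by positivity)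
    set k : ℕ := max k0 ⌈N⌉₊ with hk
    refine ⟨tseq (φ k), ?_, htknn (φ k), ?_⟩
    · calc N ≤ (⌈N⌉₊ : ℝ) := Nat.le_ceil N
        _ ≤ (k:ℝ) := Nat.cast_le.mpr (le_max_right _ _)
        _ ≤ ((φ k : ℕ) : ℝ) := Nat.cast_le.mpr hφmono.le_apply
        _ ≤ tseq (φ k) := htk1 (φ k)
    · have := hk0 k (le_max_left _ _)
      simpa [Function.comp] using this
  choose uf huf1 huf2 huf3 using hstep
  set seq : ℕ → ℝ := fun i => Nat.rec (uf 0) (fun _ prev => uf (prev + τ)) i with hseq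
  have hseq0 : seq 0 = uf 0 := rfl
  have hseqS : ∀ i, seq (i+1) = uf (seq i + τ) := fun i => rfl
  have hseqnn : ∀ i, 0 ≤ seq i := by
    intro i
    cases i with
    | zero => exact huf2 0
    | succ j => rw [hseqS j]; exact huf2 _
  have hgap : ∀ i, seq i + τ ≤ seq (i+1) := by
    intro i
    rw [hseqS i]
    exact huf1 _
  have hnear : ∀ i, dist (x (seq i)) y < η/2 := by
    intro i
    cases i with
    | zero => exact huf3 0
    | succ j => rw [hseqS j]; exact huf3 _
  have hdec : ∀ i, W (seq (i+1)) ≤ W (seq i) - (aPg/2)^2 * τ := by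
    intro i
    have h1 := hdecay (seq i) (hseqnn i) (hnear i)
    have h2 : W (seq (i+1)) ≤ W (seq i + τ) :=
      hWanti _ _ (by linarith [hseqnn i, hτpos]) (hgap i)
    exact le_trans h2 h1
  have hiter : ∀ i : ℕ, W (seq i) ≤ W (seq 0) - i * ((aPg/2)^2 * τ) := by
    intro i
    induction i with
    | zero => simp
    | succ j ih =>
      have := hdec j
      push_cast
      push_cast at ih
      linarith
  obtain ⟨i, hi⟩ := exists_nat_gt ((W (seq 0) + Mf) / ((aPg/2)^2 * τ))
  have hcpos : 0 < (aPg/2)^2 * τ := by positivity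
  rw [div_lt_iff₀ hcpos] at hi
  have h1 := hiter i
  have h2 := hWlb (seq i) (hseqnn i)
  clear_value W seq aPg τ
  linarith only [hi, h1, h2]
end
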